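/- Let ν = (n₁,…,n_k) be a tuple of positive integers, let ℓ be an integer with ℓ ≥ (1/2)·max{n₁+1,…,n_k+1,k}, and let m ≥ 1 be an integer. Then there exist real (2m+1)×(2m+1) matrices P₁, …, P_{2ℓk} such that for all i ≠ j the sign of det(P_i − P_j), taken in {−1, 0, 1}, equals the entry (B_{ν,ℓ})_{ij}. -/

import Mathlib

open Matrix

/-- Entry of the antisymmetric matrix `S_N` whose entries above the diagonal are all `1`
(indices are 0-based naturals). -/
def SmatE (p q : ℕ) : ℤ := if p < q then 1 else if q < p then -1 else 0

/-- The vector `v_{n,ℓ} ∈ ℤ^{2ℓ-1}` (0-based index `p`). -/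
def vvecE (n ℓ p : ℕ) : ℤ :=
  if p < n then (-1) ^ p
  else if p = 2 * ℓ - 2 ∧ Even n then 0
  else 1

/-- Entry of the 2ℓ×2ℓ block matrix `A_{n,ℓ} = [[S_{2ℓ-1}, v_{n,ℓ}], [-v_{n,ℓ}ᵀ, 0]]`
(0-based indices). -/
def AmatE (n ℓ p q : ℕ) : ℤ :=
  if p < 2 * ℓ - 1 then
    (if q < 2 * ℓ - 1 then SmatE p q else vvecE n ℓ p)
  else
    (if q < 2 * ℓ - 1 then -(vvecE n ℓ q) else 0)

/-- The antisymmetric 2ℓ×2ℓ integer matrix `A_{n,ℓ}`. -/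
def Amat (n ℓ : ℕ) : Matrix (Fin (2 * ℓ)) (Fin (2 * ℓ)) ℤ :=
  Matrix.of fun i j => AmatE n ℓ (i : ℕ) (j : ℕ)

/-- The antisymmetric `2ℓk × 2ℓk` matrix `B_{ν,ℓ}` for `ν = (ν 0, …, ν (k-1))`, defined
inductively: `B` for `k = 1` is `A_{ν 0, ℓ}`, and `B` for `k+1` is the block matrix
`[[B_k, C],[-Cᵀ, A_{ν k, ℓ}]]` where each column of `C` equals the `k`-th column
(1-based; 0-based index `k-1`) of `B_k`. -/
def Bmat (ℓ : ℕ) (ν : ℕ → ℕ) : (k : ℕ) → Matrix (Fin (2 * ℓ * k)) (Fin (2 * ℓ * k)) ℤ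
  | 0 => 0
  | k + 1 =>
    let B := Bmat ℓ ν k
    let C : Matrix (Fin (2 * ℓ * k)) (Fin (2 * ℓ)) ℤ :=
      Matrix.of fun i _ => if h : k - 1 < 2 * ℓ * k then B i ⟨k - 1, h⟩ else 0
    Matrix.reindex (finSumFinEquiv.trans (finCongr (by ring)))
      (finSumFinEquiv.trans (finCongr (by ring)))
      (Matrix.fromBlocks B C (-Cᵀ) (Amat (ν k) ℓ))

namespace S6

lemma div_eq_of (L t k : ℕ) (h1 : L*k ≤ t) (h2 : t < L*k + L) : t/L = k := by
  rcases Nat.eq_zero_or_pos L with h|h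
  · omega
  · have e1 : k * L = L * k := by ring
    have e2 : (k+1) * L = L * k + L := by ring
    exact Nat.div_eq_of_lt_le (by omega) (by omega)

lemma mod_eq_of (L t k : ℕ) (h1 : L*k ≤ t) (h2 : t < L*k + L) : t % L = t - L*k := by
  have h3 := Nat.mod_add_div t L
  have h4 : t / L = k := div_eq_of L t k h1 h2
  rw [h4] at h3
  omega

lemma div_lt_of (L t k : ℕ) (h : t < L*k) : t/L < k := Nat.div_lt_of_lt_mul h

lemma AmatE_diag (n ℓ p : ℕ) : AmatE n ℓ p p = 0 := by
  unfold AmatE SmatE; split_ifs <;> omega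

lemma AmatE_antisymm (n ℓ p q : ℕ) : AmatE n ℓ p q = -AmatE n ℓ q p := by
  unfold AmatE SmatE
  split_ifs <;> omega

/-- anchor position (as an index into block 0). -/
def anc (ℓ t : ℕ) : ℕ := if t < 2 * ℓ then t else t / (2 * ℓ) - 1

/-- closed form for the entries of `Bmat`. -/
def Bent (ℓ : ℕ) (ν : ℕ → ℕ) (t s : ℕ) : ℤ :=
  if t / (2 * ℓ) = s / (2 * ℓ) then AmatE (ν (t / (2 * ℓ))) ℓ (t % (2 * ℓ)) (s % (2 * ℓ))
  else AmatE (ν 0) ℓ (anc ℓ t) (anc ℓ s)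

lemma Bent_antisymm (ℓ : ℕ) (ν : ℕ → ℕ) (t s : ℕ) : Bent ℓ ν t s = -Bent ℓ ν s t := by
  unfold Bent
  by_cases h : t / (2 * ℓ) = s / (2 * ℓ)
  · rw [if_pos h, if_pos h.symm, h, AmatE_antisymm]
  · rw [if_neg h, if_neg (fun hh => h hh.symm), AmatE_antisymm]

lemma Bent_anchor (ℓ k : ℕ) (ν : ℕ → ℕ) (hℓ : 1 ≤ ℓ) (hk : 1 ≤ k) (hk2 : k ≤ 2 * ℓ)
    (t s : ℕ) (ht : t < 2 * ℓ * k) (hs1 : 2 * ℓ * k ≤ s) (hs2 : s < 2 * ℓ * (k + 1)) :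
    Bent ℓ ν t s = Bent ℓ ν t (k - 1) := by
  have hLL : 2 * ℓ * (k+1) = 2 * ℓ * k + 2 * ℓ := by ring
  have h2k : 2 * ℓ * 1 ≤ 2 * ℓ * k := Nat.mul_le_mul_left _ hk
  have hsd : s / (2 * ℓ) = k := div_eq_of (2*ℓ) s k (by omega) (by omega)
  have htlt : t / (2 * ℓ) < k := div_lt_of _ _ _ ht
  have hkd : (k - 1) / (2 * ℓ) = 0 := Nat.div_eq_of_lt (by omega)
  have hancs : anc ℓ s = k - 1 := by unfold anc; rw [if_neg (by omega), hsd]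
  unfold Bent
  rw [if_neg (by omega)]
  by_cases h0 : t < 2 * ℓ
  · have ht0 : t / (2 * ℓ) = 0 := Nat.div_eq_of_lt h0
    rw [if_pos (by omega), ht0, hancs]
    unfold anc
    rw [if_pos h0, Nat.mod_eq_of_lt h0, Nat.mod_eq_of_lt (by omega)]
  · have ht1 : 1 ≤ t / (2 * ℓ) := (Nat.one_le_div_iff (by omega)).mpr (by omega)
    rw [if_neg (by omega), hancs]
    congr 1
    unfold anc
    rw [if_pos (by omega)]

lemma closedB (ℓ : ℕ) (ν : ℕ → ℕ) :
    ∀ k, k ≤ 2 * ℓ → ∀ i j : Fin (2 * ℓ * k), Bmat ℓ ν k i j = Bent ℓ ν (i : ℕ) (j : ℕ) := by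
  intro k
  induction k with
  | zero => intro _ i; exact i.elim0
  | succ k IH =>
    intro hk i j
    have hℓ : 1 ≤ ℓ := by omega
    have hLL : 2 * ℓ * (k+1) = 2 * ℓ * k + 2 * ℓ := by ring
    have IH' := IH (by omega)
    have hsymm : ∀ (h : 2*ℓ*k + 2*ℓ = 2*ℓ*(k+1)) (i : Fin (2*ℓ*(k+1))) (hi : (i:ℕ) < 2*ℓ*k),
        (finSumFinEquiv.trans (finCongr h)).symm i = Sum.inl (⟨(i:ℕ), hi⟩ : Fin (2*ℓ*k)) := by
      intro h i hi
      rw [Equiv.symm_trans_apply]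
      have h2 : (finCongr h).symm i = Fin.castAdd (2*ℓ) ⟨(i:ℕ), hi⟩ := by ext; rfl
      rw [h2, finSumFinEquiv_symm_apply_castAdd]
    have hsymm2 : ∀ (h : 2*ℓ*k + 2*ℓ = 2*ℓ*(k+1)) (i : Fin (2*ℓ*(k+1))) (hi : ¬ (i:ℕ) < 2*ℓ*k),
        (finSumFinEquiv.trans (finCongr h)).symm i
          = Sum.inr (⟨(i:ℕ) - 2*ℓ*k, by have := i.isLt; omega⟩ : Fin (2*ℓ)) := by
      intro h i hi
      rw [Equiv.symm_trans_apply]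
      have h2 : (finCongr h).symm i
          = Fin.natAdd (2*ℓ*k) ⟨(i:ℕ) - 2*ℓ*k, by have := i.isLt; omega⟩ := by
        ext
        show (i:ℕ) = 2*ℓ*k + ((i:ℕ) - 2*ℓ*k)
        omega
      rw [h2, finSumFinEquiv_symm_apply_natAdd]
    rw [Bmat]
    by_cases hi : (i : ℕ) < 2*ℓ*k <;> by_cases hj : (j : ℕ) < 2*ℓ*k
    · simp only [Matrix.reindex_apply, Matrix.submatrix_apply, hsymm _ i hi, hsymm _ j hj,
        Matrix.fromBlocks_apply₁₁]
      exact IH' _ _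
    · -- old-new : C entry
      have hk1 : 1 ≤ k := by rcases Nat.eq_zero_or_pos k with rfl | h; · omega
                             · exact h
      have hkk : k * 1 ≤ k * (2 * ℓ) := Nat.mul_le_mul_left _ (by omega)
      have e3 : k * (2 * ℓ) = 2 * ℓ * k := by ring
      simp only [Matrix.reindex_apply, Matrix.submatrix_apply, hsymm _ i hi, hsymm2 _ j hj,
        Matrix.fromBlocks_apply₁₂, Matrix.of_apply]
      rw [dif_pos (show k - 1 < 2*ℓ*k by omega), IH']
      show Bent ℓ ν (i:ℕ) (k-1) = Bent ℓ ν (i:ℕ) (j:ℕ)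
      rw [Bent_anchor ℓ k ν hℓ hk1 (by omega) (i:ℕ) (j:ℕ) hi (by omega) j.isLt]
    · -- new-old : -Cᵀ entry
      have hk1 : 1 ≤ k := by rcases Nat.eq_zero_or_pos k with rfl | h; · omega
                             · exact h
      have hkk : k * 1 ≤ k * (2 * ℓ) := Nat.mul_le_mul_left _ (by omega)
      have e3 : k * (2 * ℓ) = 2 * ℓ * k := by ring
      simp only [Matrix.reindex_apply, Matrix.submatrix_apply, hsymm2 _ i hi, hsymm _ j hj,
        Matrix.fromBlocks_apply₂₁, Matrix.neg_apply, Matrix.transpose_apply, Matrix.of_apply]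
      rw [dif_pos (show k - 1 < 2*ℓ*k by omega), IH']
      show -Bent ℓ ν (j:ℕ) (k-1) = Bent ℓ ν (i:ℕ) (j:ℕ)
      rw [Bent_antisymm ℓ ν (i:ℕ) (j:ℕ),
        Bent_anchor ℓ k ν hℓ hk1 (by omega) (j:ℕ) (i:ℕ) hj (by omega) i.isLt]
    · -- new-new : Amat entry
      simp only [Matrix.reindex_apply, Matrix.submatrix_apply, hsymm2 _ i hi, hsymm2 _ j hj,
        Matrix.fromBlocks_apply₂₂, Amat, Matrix.of_apply]
      have hid : (i:ℕ) / (2*ℓ) = k := div_eq_of _ _ _ (by omega) (by have := i.isLt; omega)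
      have hjd : (j:ℕ) / (2*ℓ) = k := div_eq_of _ _ _ (by omega) (by have := j.isLt; omega)
      have him : (i:ℕ) % (2*ℓ) = (i:ℕ) - 2*ℓ*k := mod_eq_of _ _ _ (by omega) (by have := i.isLt; omega)
      have hjm : (j:ℕ) % (2*ℓ) = (j:ℕ) - 2*ℓ*k := mod_eq_of _ _ _ (by omega) (by have := j.isLt; omega)
      unfold Bent
      rw [if_pos (by rw [hid, hjd]), hid, him, hjm]


def Yc (n ℓ p : ℕ) : ℤ :=
  if p < n ∧ p % 2 = 1 then (p : ℤ) + 1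
  else if p = 2 * ℓ - 2 ∧ n % 2 = 0 then 2 * (ℓ : ℤ) + 1
  else 2 * (ℓ : ℤ) + 1 + p + 2

def uc (n ℓ p : ℕ) : ℤ :=
  if p = 2 * ℓ - 1 then (if n % 2 = 0 then -(2 * (ℓ : ℤ) - 2) else -(2 * (ℓ : ℤ) - 1))
  else -(p : ℤ)

def vc (n ℓ p : ℕ) : ℤ :=
  if p = 2 * ℓ - 1 then -(2 * (ℓ : ℤ) + 1) else Yc n ℓ p

def wc (n ℓ p : ℕ) : ℤ :=
  if p = 2 * ℓ - 1 then 2 * (ℓ : ℤ) + 1 else Yc n ℓ p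



lemma Yc_pos (n ℓ p : ℕ) : 1 ≤ Yc n ℓ p := by
  unfold Yc; split_ifs <;> omega

lemma Yc_inj (n ℓ : ℕ) {p q : ℕ} (hp : p ≤ 2 * ℓ - 2) (hq : q ≤ 2 * ℓ - 2)
    (hℓ : 1 ≤ ℓ) (hne : p ≠ q) : Yc n ℓ p ≠ Yc n ℓ q := by
  unfold Yc; split_ifs <;> omega

/-- the star-column case: `p ≤ 2ℓ-2`, `q = 2ℓ-1`. -/
lemma sign_A_star (n ℓ p : ℕ) (hn : 1 ≤ n) (hnl : n + 1 ≤ 2 * ℓ) (hp : p < 2 * ℓ - 1) :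
    Int.sign ((uc n ℓ p - uc n ℓ (2 * ℓ - 1)) * (vc n ℓ p - vc n ℓ (2 * ℓ - 1)) *
      (wc n ℓ p - wc n ℓ (2 * ℓ - 1))) = vvecE n ℓ p := by
  have hℓ : 1 ≤ ℓ := by omega
  have hpne : p ≠ 2 * ℓ - 1 := by omega
  have hv' : 0 < vc n ℓ p - vc n ℓ (2 * ℓ - 1) := by
    have := Yc_pos n ℓ p; unfold vc; split_ifs <;> omega
  rcases Nat.lt_or_ge p n with hlt | hge
  · rcases Nat.even_or_odd p with hep | hop
    · -- p even, p < n : value 1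
      have hep' := Nat.even_iff.mp hep
      have hvv : vvecE n ℓ p = 1 := by
        unfold vvecE
        rw [if_pos hlt]
        exact hep.neg_one_pow
      have hu' : 0 < uc n ℓ p - uc n ℓ (2 * ℓ - 1) := by
        unfold uc; split_ifs <;> omega
      have hw' : 0 < wc n ℓ p - wc n ℓ (2 * ℓ - 1) := by
        unfold wc Yc; split_ifs <;> omega
      rw [hvv]; exact Int.sign_eq_one_iff_pos.mpr (mul_pos (mul_pos hu' hv') hw')
    · -- p odd, p < n : value -1
      have hop' := Nat.odd_iff.mp hop
      have hvv : vvecE n ℓ p = -1 := by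
        unfold vvecE
        rw [if_pos hlt]
        exact hop.neg_one_pow
      have hu' : 0 < uc n ℓ p - uc n ℓ (2 * ℓ - 1) := by
        unfold uc; split_ifs <;> omega
      have hw' : wc n ℓ p - wc n ℓ (2 * ℓ - 1) < 0 := by
        unfold wc Yc; split_ifs <;> omega
      rw [hvv]; exact Int.sign_eq_neg_one_iff_neg.mpr
        (mul_neg_of_pos_of_neg (mul_pos hu' hv') hw')
  · by_cases hsp : p = 2 * ℓ - 2 ∧ n % 2 = 0
    · -- the zero entry
      have hvv : vvecE n ℓ p = 0 := by
        unfold vvecE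
        rw [if_neg (by omega), if_pos ⟨hsp.1, Nat.even_iff.mpr hsp.2⟩]
      have hu0 : uc n ℓ p - uc n ℓ (2 * ℓ - 1) = 0 := by
        unfold uc; split_ifs <;> omega
      rw [hvv, hu0, zero_mul, zero_mul, Int.sign_zero]
    · -- value 1
      have hsp' : ¬(p = 2 * ℓ - 2 ∧ Even n) := by
        rw [Nat.even_iff]; exact hsp
      have hvv : vvecE n ℓ p = 1 := by
        unfold vvecE
        rw [if_neg (by omega), if_neg hsp']
      have hu' : 0 < uc n ℓ p - uc n ℓ (2 * ℓ - 1) := by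
        unfold uc; split_ifs <;> omega
      have hw' : 0 < wc n ℓ p - wc n ℓ (2 * ℓ - 1) := by
        unfold wc Yc; split_ifs <;> omega
      rw [hvv]; exact Int.sign_eq_one_iff_pos.mpr (mul_pos (mul_pos hu' hv') hw')





/-- the main A-pattern sign lemma. -/
lemma sign_A (n ℓ p q : ℕ) (hn : 1 ≤ n) (hnl : n + 1 ≤ 2 * ℓ)
    (hp : p < 2 * ℓ) (hq : q < 2 * ℓ) :
    Int.sign ((uc n ℓ p - uc n ℓ q) * (vc n ℓ p - vc n ℓ q) * (wc n ℓ p - wc n ℓ q))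
      = AmatE n ℓ p q := by
  have hℓ : 1 ≤ ℓ := by omega
  by_cases hpq : p = q
  · subst hpq; simp [AmatE_diag]
  rcases Nat.lt_or_ge p (2 * ℓ - 1) with hp1 | hp1
  · rcases Nat.lt_or_ge q (2 * ℓ - 1) with hq1 | hq1
    · -- chain
      have hA : AmatE n ℓ p q = SmatE p q := by
        unfold AmatE; rw [if_pos hp1, if_pos hq1]
      have hvw : wc n ℓ p - wc n ℓ q = vc n ℓ p - vc n ℓ q := by
        unfold wc vc; rw [if_neg (by omega), if_neg (by omega), if_neg (by omega),
          if_neg (by omega)]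
      have hvne : vc n ℓ p - vc n ℓ q ≠ 0 := by
        unfold vc; rw [if_neg (by omega), if_neg (by omega)]
        have := Yc_inj n ℓ (p := p) (q := q) (by omega) (by omega) hℓ hpq
        omega
      rw [hA, hvw, mul_assoc]
      rcases Nat.lt_or_ge p q with h | h
      · have hu' : 0 < uc n ℓ p - uc n ℓ q := by unfold uc; split_ifs <;> omega
        rw [SmatE, if_pos h]
        exact Int.sign_eq_one_iff_pos.mpr (mul_pos hu' (mul_self_pos.mpr hvne))
      · have hu' : uc n ℓ p - uc n ℓ q < 0 := by unfold uc; split_ifs <;> omega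
        rw [SmatE, if_neg (by omega), if_pos (by omega)]
        exact Int.sign_eq_neg_one_iff_neg.mpr
          (mul_neg_of_neg_of_pos hu' (mul_self_pos.mpr hvne))
    · -- q = 2ℓ-1
      have hq2 : q = 2 * ℓ - 1 := by omega
      subst hq2
      have hA : AmatE n ℓ p (2 * ℓ - 1) = vvecE n ℓ p := by
        unfold AmatE; rw [if_pos hp1, if_neg (by omega)]
      rw [hA]; exact sign_A_star n ℓ p hn hnl hp1
  · have hp2 : p = 2 * ℓ - 1 := by omega
    subst hp2
    rcases Nat.lt_or_ge q (2 * ℓ - 1) with hq1 | hq1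
    · have hA : AmatE n ℓ (2 * ℓ - 1) q = -vvecE n ℓ q := by
        unfold AmatE; rw [if_neg (by omega), if_pos hq1]
      have hswap : (uc n ℓ (2 * ℓ - 1) - uc n ℓ q) * (vc n ℓ (2 * ℓ - 1) - vc n ℓ q) *
          (wc n ℓ (2 * ℓ - 1) - wc n ℓ q)
          = -((uc n ℓ q - uc n ℓ (2 * ℓ - 1)) * (vc n ℓ q - vc n ℓ (2 * ℓ - 1)) *
            (wc n ℓ q - wc n ℓ (2 * ℓ - 1))) := by ring
      rw [hA, hswap, Int.sign_neg, sign_A_star n ℓ q hn hnl hq1]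
    · omega



lemma sign_cast (z : ℤ) : (SignType.sign ((z : ℝ)) : ℤ) = Int.sign z := by
  rcases lt_trichotomy z 0 with h | h | h
  · rw [sign_neg (by exact_mod_cast h), Int.sign_eq_neg_one_iff_neg.mpr h]; simp
  · subst h; simp
  · rw [sign_pos (by exact_mod_cast h), Int.sign_eq_one_iff_pos.mpr h]; simp

lemma sign_shift (z : ℤ) (e : ℝ) (hz : z ≠ 0) (he : |e| < 1) :
    (SignType.sign ((z : ℝ) + e) : ℤ) = Int.sign z := by
  rw [abs_lt] at he
  rcases lt_trichotomy z 0 with h | h | h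
  · have h0 : z ≤ -1 := by omega
    have h1 : (z : ℝ) ≤ -1 := by exact_mod_cast h0
    rw [sign_neg (by linarith), Int.sign_eq_neg_one_iff_neg.mpr h]; simp
  · exact absurd h hz
  · have h1 : (1 : ℝ) ≤ (z : ℝ) := by exact_mod_cast h
    rw [sign_pos (by linarith), Int.sign_eq_one_iff_pos.mpr h]; simp

lemma bnd3 {a b c A B C : ℝ} (ha : |a| ≤ A) (hb : |b| ≤ B) (hc : |c| ≤ C) :
    |a * b * c| ≤ A * B * C := by
  have h0 : (0:ℝ) ≤ A := le_trans (abs_nonneg a) ha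
  have h1 : (0:ℝ) ≤ B := le_trans (abs_nonneg b) hb
  rw [abs_mul, abs_mul]
  exact mul_le_mul (mul_le_mul ha hb (abs_nonneg b) h0) hc (abs_nonneg c)
    (mul_nonneg h0 h1)

/-- the key estimate for the mixed (block-0 versus later block) case. -/
lemma sign_mixed (x0 y0 z0 : ℤ) (hx0 : x0 ≠ 0) (hy0 : y0 ≠ 0) (hz0 : z0 ≠ 0)
    (C α β ε γ : ℝ) (hC : 1 ≤ C)
    (hx : |(x0 : ℝ)| ≤ 2 * C) (hy : |(y0 : ℝ)| ≤ 2 * C) (hz : |(z0 : ℝ)| ≤ 2 * C)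
    (ha : |α| ≤ 1 / (64 * C ^ 2)) (hb : |β| ≤ 1 / (64 * C ^ 2))
    (he : |ε| ≤ 1 / (64 * C ^ 2)) (hg : |γ| ≤ 1 / (64 * C ^ 2)) :
    (SignType.sign (((x0 : ℝ) - α) * ((y0 : ℝ) - β) * ((z0 : ℝ) - ε) - ((y0 : ℝ) - β) * γ) : ℤ)
      = Int.sign (x0 * y0 * z0) := by
  set σ : ℝ := 1 / (64 * C ^ 2) with hσdef
  have hC0 : (0:ℝ) < C := by linarith
  have hσ0 : 0 < σ := by positivity
  have hσ1 : σ ≤ 1 := by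
    rw [hσdef, div_le_one (by positivity)]
    nlinarith
  set E : ℝ := ((x0 : ℝ) - α) * ((y0 : ℝ) - β) * ((z0 : ℝ) - ε) - ((y0 : ℝ) - β) * γ
    - (x0 : ℝ) * (y0 : ℝ) * (z0 : ℝ) with hEdef
  have key : ((x0 : ℝ) - α) * ((y0 : ℝ) - β) * ((z0 : ℝ) - ε) - ((y0 : ℝ) - β) * γ
      = ((x0 * y0 * z0 : ℤ) : ℝ) + E := by push_cast; ring
  rw [key, sign_shift _ _ (by exact mul_ne_zero (mul_ne_zero hx0 hy0) hz0)]
  -- |E| < 1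
  have t1 : |α * (y0 : ℝ) * (z0 : ℝ)| ≤ σ * (2*C) * (2*C) := bnd3 ha hy hz
  have t2 : |β * (x0 : ℝ) * (z0 : ℝ)| ≤ σ * (2*C) * (2*C) := bnd3 hb hx hz
  have t3 : |ε * (x0 : ℝ) * (y0 : ℝ)| ≤ σ * (2*C) * (2*C) := bnd3 he hx hy
  have t4 : |α * β * (z0 : ℝ)| ≤ σ * σ * (2*C) := bnd3 ha hb hz
  have t5 : |α * ε * (y0 : ℝ)| ≤ σ * σ * (2*C) := bnd3 ha he hy
  have t6 : |β * ε * (x0 : ℝ)| ≤ σ * σ * (2*C) := bnd3 hb he hx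
  have t7 : |α * β * ε| ≤ σ * σ * σ := bnd3 ha hb he
  have t8 : |(y0:ℝ) * γ * 1| ≤ (2*C) * σ * 1 := bnd3 hy hg (by simp)
  have t9 : |β * γ * 1| ≤ σ * σ * 1 := bnd3 hb hg (by simp)
  have hEeq : E = -(α * (y0:ℝ) * (z0:ℝ)) - β * (x0:ℝ) * (z0:ℝ) - ε * (x0:ℝ) * (y0:ℝ)
      + α * β * (z0:ℝ) + α * ε * (y0:ℝ) + β * ε * (x0:ℝ) - α * β * ε
      - (y0:ℝ) * γ * 1 + β * γ * 1 := by rw [hEdef]; ring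
  have habs : |E| ≤ 3 * (σ * (2*C) * (2*C)) + 3 * (σ * σ * (2*C)) + σ*σ*σ
      + (2*C) * σ * 1 + σ * σ * 1 := by
    rw [hEeq]
    calc |(-(α * (y0:ℝ) * (z0:ℝ)) - β * (x0:ℝ) * (z0:ℝ) - ε * (x0:ℝ) * (y0:ℝ)
        + α * β * (z0:ℝ) + α * ε * (y0:ℝ) + β * ε * (x0:ℝ) - α * β * ε
        - (y0:ℝ) * γ * 1 + β * γ * 1)|
        ≤ |(-(α * (y0:ℝ) * (z0:ℝ)) - β * (x0:ℝ) * (z0:ℝ) - ε * (x0:ℝ) * (y0:ℝ)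
        + α * β * (z0:ℝ) + α * ε * (y0:ℝ) + β * ε * (x0:ℝ) - α * β * ε
        - (y0:ℝ) * γ * 1)| + |β * γ * 1| := abs_add_le _ _
      _ ≤ (|(-(α * (y0:ℝ) * (z0:ℝ)) - β * (x0:ℝ) * (z0:ℝ) - ε * (x0:ℝ) * (y0:ℝ)
        + α * β * (z0:ℝ) + α * ε * (y0:ℝ) + β * ε * (x0:ℝ) - α * β * ε)|
          + |(y0:ℝ) * γ * 1|) + |β * γ * 1| := by
            gcongr; exact abs_sub _ _
      _ ≤ ((|(-(α * (y0:ℝ) * (z0:ℝ)) - β * (x0:ℝ) * (z0:ℝ) - ε * (x0:ℝ) * (y0:ℝ)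
        + α * β * (z0:ℝ) + α * ε * (y0:ℝ) + β * ε * (x0:ℝ))| + |α * β * ε|)
          + |(y0:ℝ) * γ * 1|) + |β * γ * 1| := by gcongr; exact abs_sub _ _
      _ ≤ (((|(-(α * (y0:ℝ) * (z0:ℝ)) - β * (x0:ℝ) * (z0:ℝ) - ε * (x0:ℝ) * (y0:ℝ)
        + α * β * (z0:ℝ) + α * ε * (y0:ℝ))| + |β * ε * (x0:ℝ)|) + |α * β * ε|)
          + |(y0:ℝ) * γ * 1|) + |β * γ * 1| := by gcongr; exact abs_add_le _ _
      _ ≤ ((((|(-(α * (y0:ℝ) * (z0:ℝ)) - β * (x0:ℝ) * (z0:ℝ) - ε * (x0:ℝ) * (y0:ℝ)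
        + α * β * (z0:ℝ))| + |α * ε * (y0:ℝ)|) + |β * ε * (x0:ℝ)|) + |α * β * ε|)
          + |(y0:ℝ) * γ * 1|) + |β * γ * 1| := by gcongr; exact abs_add_le _ _
      _ ≤ (((((|(-(α * (y0:ℝ) * (z0:ℝ)) - β * (x0:ℝ) * (z0:ℝ) - ε * (x0:ℝ) * (y0:ℝ))|
        + |α * β * (z0:ℝ)|) + |α * ε * (y0:ℝ)|) + |β * ε * (x0:ℝ)|) + |α * β * ε|)
          + |(y0:ℝ) * γ * 1|) + |β * γ * 1| := by gcongr; exact abs_add_le _ _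
      _ ≤ ((((((|(-(α * (y0:ℝ) * (z0:ℝ)) - β * (x0:ℝ) * (z0:ℝ))| + |ε * (x0:ℝ) * (y0:ℝ)|)
        + |α * β * (z0:ℝ)|) + |α * ε * (y0:ℝ)|) + |β * ε * (x0:ℝ)|) + |α * β * ε|)
          + |(y0:ℝ) * γ * 1|) + |β * γ * 1| := by gcongr; exact abs_sub _ _
      _ ≤ (((((((|(α * (y0:ℝ) * (z0:ℝ))| + |β * (x0:ℝ) * (z0:ℝ)|) + |ε * (x0:ℝ) * (y0:ℝ)|)
        + |α * β * (z0:ℝ)|) + |α * ε * (y0:ℝ)|) + |β * ε * (x0:ℝ)|) + |α * β * ε|)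
          + |(y0:ℝ) * γ * 1|) + |β * γ * 1| := by
            gcongr
            rw [← abs_neg (α * (y0:ℝ) * (z0:ℝ))]
            exact abs_sub _ _
      _ ≤ 3 * (σ * (2*C) * (2*C)) + 3 * (σ * σ * (2*C)) + σ*σ*σ
          + (2*C) * σ * 1 + σ * σ * 1 := by
            linarith
  have hfin : 3 * (σ * (2*C) * (2*C)) + 3 * (σ * σ * (2*C)) + σ*σ*σ
      + (2*C) * σ * 1 + σ * σ * 1 < 1 := by
    have h1 : σ * C ^ 2 = 1 / 64 := by
      rw [hσdef]; field_simp
    nlinarith [hσ0, hσ1, hC, sq_nonneg σ, sq_nonneg C]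
  exact lt_of_le_of_lt habs hfin
noncomputable def ee (ℓ : ℕ) : ℝ := 1 / (64 * (4 * (ℓ:ℝ) + 2) ^ 3)

noncomputable def Ur (ℓ : ℕ) (ν : ℕ → ℕ) (t : ℕ) : ℝ :=
  (uc (ν 0) ℓ (anc ℓ t) : ℝ)
    + (if t < 2*ℓ then 0 else ee ℓ * (uc (ν (t / (2*ℓ))) ℓ (t % (2*ℓ)) : ℝ))

noncomputable def Vr (ℓ : ℕ) (ν : ℕ → ℕ) (t : ℕ) : ℝ :=
  (vc (ν 0) ℓ (anc ℓ t) : ℝ)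
    + (if t < 2*ℓ then 0 else ee ℓ * (vc (ν (t / (2*ℓ))) ℓ (t % (2*ℓ)) : ℝ))

noncomputable def Wr (ℓ : ℕ) (ν : ℕ → ℕ) (t : ℕ) : ℝ :=
  (wc (ν 0) ℓ (anc ℓ t) : ℝ)
    + (if t < 2*ℓ then 0 else ee ℓ * (wc (ν (t / (2*ℓ))) ℓ (t % (2*ℓ)) : ℝ))

noncomputable def Gr (ℓ : ℕ) (ν : ℕ → ℕ) (t : ℕ) : ℝ :=
  if t < 2*ℓ then 0
  else (ee ℓ)^2 * ((uc (ν (t / (2*ℓ))) ℓ (t % (2*ℓ)) : ℝ) * (wc (ν (t / (2*ℓ))) ℓ (t % (2*ℓ)) : ℝ))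

noncomputable def cr (ℓ : ℕ) (t : ℕ) : ℝ := if t < 2*ℓ then 0 else 1

noncomputable def P3 (ℓ : ℕ) (ν : ℕ → ℕ) (t : ℕ) : Matrix (Fin 3) (Fin 3) ℝ :=
  !![Ur ℓ ν t, 0, cr ℓ t; 0, Vr ℓ ν t, cr ℓ t; Gr ℓ ν t, 0, Wr ℓ ν t]

lemma det_P3 (ℓ : ℕ) (ν : ℕ → ℕ) (t s : ℕ) :
    (P3 ℓ ν t - P3 ℓ ν s).det
      = (Ur ℓ ν t - Ur ℓ ν s) * (Vr ℓ ν t - Vr ℓ ν s) * (Wr ℓ ν t - Wr ℓ ν s)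
        - (cr ℓ t - cr ℓ s) * ((Vr ℓ ν t - Vr ℓ ν s) * (Gr ℓ ν t - Gr ℓ ν s)) := by
  simp [P3, Matrix.det_fin_three, Matrix.sub_apply]
  ring

lemma sign_smul_pos (c x : ℝ) (hc : 0 < c) : SignType.sign (c * x) = SignType.sign x := by
  rw [sign_mul, sign_pos hc, one_mul]

lemma sign_det_swap (A B : Matrix (Fin 3) (Fin 3) ℝ) :
    (SignType.sign ((A - B).det) : ℤ) = -(SignType.sign ((B - A).det) : ℤ) := by
  rw [show A - B = -(B - A) from (neg_sub _ _).symm, Matrix.det_neg]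
  simp [Left.sign_neg, Fintype.card_fin, pow_succ]

lemma ee_pos (ℓ : ℕ) : 0 < ee ℓ := by
  unfold ee; positivity




lemma two_le_iff (ℓ x : ℕ) (h2ℓ : 0 < 2*ℓ) : 2*ℓ ≤ x ↔ 1 ≤ x/(2*ℓ) :=
  (Nat.one_le_div_iff h2ℓ).symm

lemma core_same (ℓ k : ℕ) (ν : ℕ → ℕ) (hk : 1 ≤ k) (hν : ∀ i < k, 1 ≤ ν i)
    (hνℓ : ∀ i < k, ν i + 1 ≤ 2*ℓ) (hkℓ : k ≤ 2*ℓ) (t s : ℕ) (ht : t < 2*ℓ*k) (hs : s < 2*ℓ*k)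
    (hbc : t/(2*ℓ) = s/(2*ℓ)) :
    (SignType.sign ((P3 ℓ ν t - P3 ℓ ν s).det) : ℤ) = Bent ℓ ν t s := by
  have hℓ1 : 1 ≤ ℓ := by omega
  have h2ℓ : 0 < 2*ℓ := by omega
  have hbk : t/(2*ℓ) < k := div_lt_of _ _ _ ht
  have hkey1 := two_le_iff ℓ t h2ℓ
  have hkey2 := two_le_iff ℓ s h2ℓ
  have hpm : t % (2*ℓ) < 2*ℓ := Nat.mod_lt _ h2ℓ
  have hqm : s % (2*ℓ) < 2*ℓ := Nat.mod_lt _ h2ℓ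
  unfold Bent
  rw [if_pos hbc]
  rcases Nat.lt_or_ge t (2*ℓ) with h0 | h0
  · -- block 0
    have hs0 : s < 2*ℓ := by omega
    have ht0 : t / (2*ℓ) = 0 := Nat.div_eq_of_lt h0
    have hU : Ur ℓ ν t - Ur ℓ ν s = ((uc (ν 0) ℓ t - uc (ν 0) ℓ s : ℤ) : ℝ) := by
      unfold Ur anc
      rw [if_pos h0, if_pos hs0, if_pos h0, if_pos hs0]
      push_cast; ring
    have hV : Vr ℓ ν t - Vr ℓ ν s = ((vc (ν 0) ℓ t - vc (ν 0) ℓ s : ℤ) : ℝ) := by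
      unfold Vr anc
      rw [if_pos h0, if_pos hs0, if_pos h0, if_pos hs0]
      push_cast; ring
    have hW : Wr ℓ ν t - Wr ℓ ν s = ((wc (ν 0) ℓ t - wc (ν 0) ℓ s : ℤ) : ℝ) := by
      unfold Wr anc
      rw [if_pos h0, if_pos hs0, if_pos h0, if_pos hs0]
      push_cast; ring
    have hcr0 : cr ℓ t - cr ℓ s = 0 := by
      unfold cr; rw [if_pos h0, if_pos hs0]; ring
    rw [det_P3, hU, hV, hW, hcr0, zero_mul, sub_zero, ← Int.cast_mul, ← Int.cast_mul,
      sign_cast, ht0, Nat.mod_eq_of_lt h0, Nat.mod_eq_of_lt hs0]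
    exact sign_A (ν 0) ℓ t s (hν 0 (by omega)) (hνℓ 0 (by omega)) h0 hs0
  · -- common later block
    have hs0 : 2*ℓ ≤ s := by omega
    have hs0' : ¬ s < 2*ℓ := by omega
    have h0' : ¬ t < 2*ℓ := by omega
    have hU : Ur ℓ ν t - Ur ℓ ν s
        = ee ℓ * ((uc (ν (t/(2*ℓ))) ℓ (t % (2*ℓ)) - uc (ν (t/(2*ℓ))) ℓ (s % (2*ℓ)) : ℤ) : ℝ) := by
      unfold Ur anc
      rw [if_neg h0', if_neg hs0', if_neg h0', if_neg hs0', ← hbc]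
      push_cast; ring
    have hV : Vr ℓ ν t - Vr ℓ ν s
        = ee ℓ * ((vc (ν (t/(2*ℓ))) ℓ (t % (2*ℓ)) - vc (ν (t/(2*ℓ))) ℓ (s % (2*ℓ)) : ℤ) : ℝ) := by
      unfold Vr anc
      rw [if_neg h0', if_neg hs0', if_neg h0', if_neg hs0', ← hbc]
      push_cast; ring
    have hW : Wr ℓ ν t - Wr ℓ ν s
        = ee ℓ * ((wc (ν (t/(2*ℓ))) ℓ (t % (2*ℓ)) - wc (ν (t/(2*ℓ))) ℓ (s % (2*ℓ)) : ℤ) : ℝ) := by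
      unfold Wr anc
      rw [if_neg h0', if_neg hs0', if_neg h0', if_neg hs0', ← hbc]
      push_cast; ring
    have hcr0 : cr ℓ t - cr ℓ s = 0 := by
      unfold cr; rw [if_neg h0', if_neg hs0']; ring
    rw [det_P3, hU, hV, hW, hcr0, zero_mul, sub_zero]
    rw [show ∀ a b c : ℝ, (ee ℓ * a) * (ee ℓ * b) * (ee ℓ * c) = (ee ℓ)^3 * (a*b*c) from
      fun a b c => by ring]
    rw [sign_smul_pos _ _ (by have := ee_pos ℓ; positivity), ← Int.cast_mul, ← Int.cast_mul, sign_cast]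
    exact sign_A (ν (t/(2*ℓ))) ℓ (t % (2*ℓ)) (s % (2*ℓ))
      (hν _ hbk) (hνℓ _ hbk) hpm hqm


lemma Yc_le (n ℓ p : ℕ) (hp : p < 2 * ℓ) : Yc n ℓ p ≤ 4 * (ℓ:ℤ) + 2 := by
  unfold Yc; split_ifs <;> omega

lemma uc_abs (n ℓ p : ℕ) (hp : p < 2 * ℓ) :
    -(4 * (ℓ:ℤ) + 2) ≤ uc n ℓ p ∧ uc n ℓ p ≤ 4 * (ℓ:ℤ) + 2 := by
  unfold uc; split_ifs <;> omega

lemma vc_abs (n ℓ p : ℕ) (hp : p < 2 * ℓ) :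
    -(4 * (ℓ:ℤ) + 2) ≤ vc n ℓ p ∧ vc n ℓ p ≤ 4 * (ℓ:ℤ) + 2 := by
  have := Yc_pos n ℓ p; have := Yc_le n ℓ p hp
  unfold vc; split_ifs <;> omega

lemma wc_abs (n ℓ p : ℕ) (hp : p < 2 * ℓ) :
    -(4 * (ℓ:ℤ) + 2) ≤ wc n ℓ p ∧ wc n ℓ p ≤ 4 * (ℓ:ℤ) + 2 := by
  have := Yc_pos n ℓ p; have := Yc_le n ℓ p hp
  unfold wc; split_ifs <;> omega

lemma ecoord_small (ℓ : ℕ) (z : ℤ) (h1 : -(4*(ℓ:ℤ)+2) ≤ z) (h2 : z ≤ 4*(ℓ:ℤ)+2) :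
    |ee ℓ * (z:ℝ)| ≤ 1/(64*(4*(ℓ:ℝ)+2)^2) := by
  have hC : (0:ℝ) < 4*(ℓ:ℝ)+2 := by positivity
  have hz : |(z:ℝ)| ≤ 4*(ℓ:ℝ)+2 := by
    rw [abs_le]; constructor <;> exact_mod_cast by assumption
  rw [abs_mul, abs_of_pos (ee_pos ℓ)]
  calc ee ℓ * |(z:ℝ)| ≤ ee ℓ * (4*(ℓ:ℝ)+2) := by
        have := ee_pos ℓ; gcongr
    _ = 1/(64*(4*(ℓ:ℝ)+2)^2) := by
        unfold ee; field_simp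

lemma sigma_le (ℓ : ℕ) : 1/(64*(4*(ℓ:ℝ)+2)^2) ≤ 1/64 := by
  have hC : (1:ℝ) ≤ 4*(ℓ:ℝ)+2 := by
    have : (0:ℝ) ≤ (ℓ:ℝ) := Nat.cast_nonneg ℓ
    linarith
  rw [div_le_div_iff₀ (by positivity) (by norm_num)]
  nlinarith

lemma core_both (ℓ k : ℕ) (ν : ℕ → ℕ) (hk : 1 ≤ k) (hν : ∀ i < k, 1 ≤ ν i)
    (hνℓ : ∀ i < k, ν i + 1 ≤ 2*ℓ) (hkℓ : k ≤ 2*ℓ) (t s : ℕ) (ht : t < 2*ℓ*k) (hs : s < 2*ℓ*k)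
    (hbc : t/(2*ℓ) ≠ s/(2*ℓ)) (h0 : ¬ t < 2*ℓ) (hs0 : ¬ s < 2*ℓ) :
    (SignType.sign ((P3 ℓ ν t - P3 ℓ ν s).det) : ℤ) = Bent ℓ ν t s := by
  have hℓ1 : 1 ≤ ℓ := by omega
  have h2ℓ : 0 < 2*ℓ := by omega
  have hbk : t/(2*ℓ) < k := div_lt_of _ _ _ ht
  have hck : s/(2*ℓ) < k := div_lt_of _ _ _ hs
  have hb1 : 1 ≤ t/(2*ℓ) := (Nat.one_le_div_iff h2ℓ).mpr (by omega)
  have hc1 : 1 ≤ s/(2*ℓ) := (Nat.one_le_div_iff h2ℓ).mpr (by omega)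
  set at' := t/(2*ℓ) - 1 with hatdef
  set as' := s/(2*ℓ) - 1 with hasdef
  have hat2 : at' ≤ 2*ℓ - 2 := by omega
  have has2 : as' ≤ 2*ℓ - 2 := by omega
  have hane : at' ≠ as' := by omega
  have hpm : t % (2*ℓ) < 2*ℓ := Nat.mod_lt _ h2ℓ
  have hqm : s % (2*ℓ) < 2*ℓ := Nat.mod_lt _ h2ℓ
  set L1 : ℤ := uc (ν 0) ℓ at' - uc (ν 0) ℓ as' with hL1def
  set L2 : ℤ := vc (ν 0) ℓ at' - vc (ν 0) ℓ as' with hL2def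
  set L3 : ℤ := wc (ν 0) ℓ at' - wc (ν 0) ℓ as' with hL3def
  have hL1 : L1 ≠ 0 := by
    rw [hL1def]; unfold uc
    rw [if_neg (by omega), if_neg (by omega)]
    omega
  have hL2 : L2 ≠ 0 := by
    rw [hL2def]; unfold vc
    rw [if_neg (by omega), if_neg (by omega)]
    exact sub_ne_zero.mpr (Yc_inj (ν 0) ℓ hat2 has2 hℓ1 hane)
  have hL3 : L3 ≠ 0 := by
    rw [hL3def]; unfold wc
    rw [if_neg (by omega), if_neg (by omega)]
    exact sub_ne_zero.mpr (Yc_inj (ν 0) ℓ hat2 has2 hℓ1 hane)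
  -- error bounds
  have hsm := sigma_le ℓ
  have esmall : ∀ z w : ℤ, (-(4*(ℓ:ℤ)+2) ≤ z ∧ z ≤ 4*(ℓ:ℤ)+2) →
      (-(4*(ℓ:ℤ)+2) ≤ w ∧ w ≤ 4*(ℓ:ℤ)+2) →
      |ee ℓ * (z:ℝ) - ee ℓ * (w:ℝ)| < 1 := by
    intro z w hz hw
    have h1 := ecoord_small ℓ z hz.1 hz.2
    have h2 := ecoord_small ℓ w hw.1 hw.2
    calc |ee ℓ * (z:ℝ) - ee ℓ * (w:ℝ)| ≤ |ee ℓ * (z:ℝ)| + |ee ℓ * (w:ℝ)| := abs_sub _ _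
      _ < 1 := by linarith
  have hU : Ur ℓ ν t - Ur ℓ ν s = ((L1 : ℤ) : ℝ)
      + (ee ℓ * ((uc (ν (t/(2*ℓ))) ℓ (t % (2*ℓ)) : ℤ) : ℝ)
        - ee ℓ * ((uc (ν (s/(2*ℓ))) ℓ (s % (2*ℓ)) : ℤ) : ℝ)) := by
    unfold Ur anc
    rw [if_neg h0, if_neg hs0, if_neg h0, if_neg hs0, hL1def]
    push_cast; ring
  have hV : Vr ℓ ν t - Vr ℓ ν s = ((L2 : ℤ) : ℝ)
      + (ee ℓ * ((vc (ν (t/(2*ℓ))) ℓ (t % (2*ℓ)) : ℤ) : ℝ)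
        - ee ℓ * ((vc (ν (s/(2*ℓ))) ℓ (s % (2*ℓ)) : ℤ) : ℝ)) := by
    unfold Vr anc
    rw [if_neg h0, if_neg hs0, if_neg h0, if_neg hs0, hL2def]
    push_cast; ring
  have hW : Wr ℓ ν t - Wr ℓ ν s = ((L3 : ℤ) : ℝ)
      + (ee ℓ * ((wc (ν (t/(2*ℓ))) ℓ (t % (2*ℓ)) : ℤ) : ℝ)
        - ee ℓ * ((wc (ν (s/(2*ℓ))) ℓ (s % (2*ℓ)) : ℤ) : ℝ)) := by
    unfold Wr anc
    rw [if_neg h0, if_neg hs0, if_neg h0, if_neg hs0, hL3def]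
    push_cast; ring
  have hcr0 : cr ℓ t - cr ℓ s = 0 := by
    unfold cr; rw [if_neg h0, if_neg hs0]; ring
  rw [det_P3, hcr0, zero_mul, sub_zero, hU, hV, hW, sign_mul, sign_mul]
  push_cast
  rw [sign_shift L1 _ hL1 (esmall _ _ (uc_abs _ _ _ hpm) (uc_abs _ _ _ hqm)),
    sign_shift L2 _ hL2 (esmall _ _ (vc_abs _ _ _ hpm) (vc_abs _ _ _ hqm)),
    sign_shift L3 _ hL3 (esmall _ _ (wc_abs _ _ _ hpm) (wc_abs _ _ _ hqm)),
    ← Int.sign_mul, ← Int.sign_mul]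
  rw [sign_A (ν 0) ℓ at' as' (hν 0 (by omega)) (hνℓ 0 (by omega)) (by omega) (by omega)]
  unfold Bent anc
  rw [if_neg hbc, if_neg h0, if_neg hs0]


lemma Yc_le' (n ℓ p : ℕ) (hp : p < 2 * ℓ) : Yc n ℓ p ≤ 4 * (ℓ:ℤ) + 2 := by
  unfold Yc; split_ifs <;> omega
lemma uc_abs' (n ℓ p : ℕ) (hp : p < 2 * ℓ) :
    -(4 * (ℓ:ℤ) + 2) ≤ uc n ℓ p ∧ uc n ℓ p ≤ 4 * (ℓ:ℤ) + 2 := by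
  unfold uc; split_ifs <;> omega
lemma vc_abs' (n ℓ p : ℕ) (hp : p < 2 * ℓ) :
    -(4 * (ℓ:ℤ) + 2) ≤ vc n ℓ p ∧ vc n ℓ p ≤ 4 * (ℓ:ℤ) + 2 := by
  have := Yc_pos n ℓ p; have := Yc_le' n ℓ p hp
  unfold vc; split_ifs <;> omega
lemma wc_abs' (n ℓ p : ℕ) (hp : p < 2 * ℓ) :
    -(4 * (ℓ:ℤ) + 2) ≤ wc n ℓ p ∧ wc n ℓ p ≤ 4 * (ℓ:ℤ) + 2 := by
  have := Yc_pos n ℓ p; have := Yc_le' n ℓ p hp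
  unfold wc; split_ifs <;> omega
lemma ecoord_small' (ℓ : ℕ) (z : ℤ) (h1 : -(4*(ℓ:ℤ)+2) ≤ z) (h2 : z ≤ 4*(ℓ:ℤ)+2) :
    |ee ℓ * (z:ℝ)| ≤ 1/(64*(4*(ℓ:ℝ)+2)^2) := by
  have hC : (0:ℝ) < 4*(ℓ:ℝ)+2 := by positivity
  have hz : |(z:ℝ)| ≤ 4*(ℓ:ℝ)+2 := by
    rw [abs_le]; constructor <;> exact_mod_cast by assumption
  rw [abs_mul, abs_of_pos (ee_pos ℓ)]
  calc ee ℓ * |(z:ℝ)| ≤ ee ℓ * (4*(ℓ:ℝ)+2) := by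
        have := ee_pos ℓ; gcongr
    _ = 1/(64*(4*(ℓ:ℝ)+2)^2) := by
        unfold ee; field_simp

lemma zdiff_abs (ℓ : ℕ) (z w : ℤ)
    (hz : -(4*(ℓ:ℤ)+2) ≤ z ∧ z ≤ 4*(ℓ:ℤ)+2) (hw : -(4*(ℓ:ℤ)+2) ≤ w ∧ w ≤ 4*(ℓ:ℤ)+2) :
    |((z - w : ℤ) : ℝ)| ≤ 2*(4*(ℓ:ℝ)+2) := by
  have h1 : ((z:ℝ)) ≤ 4*(ℓ:ℝ)+2 := by exact_mod_cast hz.2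
  have h2 : (-(4*(ℓ:ℝ)+2)) ≤ (z:ℝ) := by exact_mod_cast hz.1
  have h3 : ((w:ℝ)) ≤ 4*(ℓ:ℝ)+2 := by exact_mod_cast hw.2
  have h4 : (-(4*(ℓ:ℝ)+2)) ≤ (w:ℝ) := by exact_mod_cast hw.1
  rw [abs_le]
  push_cast
  constructor <;> linarith

lemma gsmall (ℓ : ℕ) (z w : ℤ)
    (hz : -(4*(ℓ:ℤ)+2) ≤ z ∧ z ≤ 4*(ℓ:ℤ)+2) (hw : -(4*(ℓ:ℤ)+2) ≤ w ∧ w ≤ 4*(ℓ:ℤ)+2) :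
    |(ee ℓ)^2 * ((z:ℝ) * (w:ℝ))| ≤ 1/(64*(4*(ℓ:ℝ)+2)^2) := by
  have hC : (0:ℝ) < 4*(ℓ:ℝ)+2 := by positivity
  have hC1 : (1:ℝ) ≤ 4*(ℓ:ℝ)+2 := by
    have : (0:ℝ) ≤ (ℓ:ℝ) := Nat.cast_nonneg ℓ
    linarith
  have hz' : |(z:ℝ)| ≤ 4*(ℓ:ℝ)+2 := by
    rw [abs_le]; exact ⟨by exact_mod_cast hz.1, by exact_mod_cast hz.2⟩
  have hw' : |(w:ℝ)| ≤ 4*(ℓ:ℝ)+2 := by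
    rw [abs_le]; exact ⟨by exact_mod_cast hw.1, by exact_mod_cast hw.2⟩
  have hee := ee_pos ℓ
  have h1 : |(ee ℓ)^2 * ((z:ℝ) * (w:ℝ))| ≤ (ee ℓ)^2 * ((4*(ℓ:ℝ)+2) * (4*(ℓ:ℝ)+2)) := by
    rw [abs_mul, abs_mul, abs_of_pos (by positivity : (0:ℝ) < (ee ℓ)^2)]
    gcongr
  have h2 : (ee ℓ)^2 * ((4*(ℓ:ℝ)+2) * (4*(ℓ:ℝ)+2)) = 1/(64^2*(4*(ℓ:ℝ)+2)^4) := by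
    unfold ee; field_simp
  have h3 : 1/(64^2*(4*(ℓ:ℝ)+2)^4) ≤ 1/(64*(4*(ℓ:ℝ)+2)^2) := by
    rw [div_le_div_iff₀ (by positivity) (by positivity)]
    nlinarith [sq_nonneg ((4*(ℓ:ℝ)+2)^2), pow_le_pow_left₀ (by linarith : (0:ℝ) ≤ 1) hC1 4]
  linarith [h1, h2.le, h2.ge, h3]

lemma core_mixed (ℓ k : ℕ) (ν : ℕ → ℕ) (hk : 1 ≤ k) (hν : ∀ i < k, 1 ≤ ν i)
    (hνℓ : ∀ i < k, ν i + 1 ≤ 2*ℓ) (hkℓ : k ≤ 2*ℓ) (t s : ℕ) (ht : t < 2*ℓ*k) (hs : s < 2*ℓ*k)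
    (h0 : t < 2*ℓ) (hs0 : ¬ s < 2*ℓ) :
    (SignType.sign ((P3 ℓ ν t - P3 ℓ ν s).det) : ℤ) = Bent ℓ ν t s := by
  have hℓ1 : 1 ≤ ℓ := by omega
  have h2ℓ : 0 < 2*ℓ := by omega
  have hν0ℓ : ν 0 + 1 ≤ 2*ℓ := hνℓ 0 (by omega)
  have hν01 : 1 ≤ ν 0 := hν 0 (by omega)
  have hck : s/(2*ℓ) < k := div_lt_of _ _ _ hs
  have hc1 : 1 ≤ s/(2*ℓ) := (Nat.one_le_div_iff h2ℓ).mpr (by omega)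
  have ht0 : t/(2*ℓ) = 0 := Nat.div_eq_of_lt h0
  have hbc : t/(2*ℓ) ≠ s/(2*ℓ) := by omega
  have hqm : s % (2*ℓ) < 2*ℓ := Nat.mod_lt _ h2ℓ
  set a := s/(2*ℓ) - 1 with hadef
  have ha2 : a ≤ 2*ℓ - 2 := by omega
  have ha2' : a < 2*ℓ := by omega
  set n' := ν (s/(2*ℓ)) with hn'def
  set q := s % (2*ℓ) with hqdef
  set x0 : ℤ := uc (ν 0) ℓ t - uc (ν 0) ℓ a with hx0def
  set y0 : ℤ := vc (ν 0) ℓ t - vc (ν 0) ℓ a with hy0def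
  set z0 : ℤ := wc (ν 0) ℓ t - wc (ν 0) ℓ a with hz0def
  have hU : Ur ℓ ν t - Ur ℓ ν s = ((x0 : ℤ) : ℝ) - ee ℓ * ((uc n' ℓ q : ℤ) : ℝ) := by
    unfold Ur anc
    rw [if_pos h0, if_pos h0, if_neg hs0, if_neg hs0, hx0def]
    push_cast; ring
  have hV : Vr ℓ ν t - Vr ℓ ν s = ((y0 : ℤ) : ℝ) - ee ℓ * ((vc n' ℓ q : ℤ) : ℝ) := by
    unfold Vr anc
    rw [if_pos h0, if_pos h0, if_neg hs0, if_neg hs0, hy0def]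
    push_cast; ring
  have hW : Wr ℓ ν t - Wr ℓ ν s = ((z0 : ℤ) : ℝ) - ee ℓ * ((wc n' ℓ q : ℤ) : ℝ) := by
    unfold Wr anc
    rw [if_pos h0, if_pos h0, if_neg hs0, if_neg hs0, hz0def]
    push_cast; ring
  have hcr : cr ℓ t - cr ℓ s = 0 - 1 := by
    unfold cr; rw [if_pos h0, if_neg hs0]
  have hG : Gr ℓ ν t - Gr ℓ ν s = 0 - (ee ℓ)^2 * ((uc n' ℓ q : ℝ) * (wc n' ℓ q : ℝ)) := by
    unfold Gr
    rw [if_pos h0, if_neg hs0]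
  have hBent : Bent ℓ ν t s = AmatE (ν 0) ℓ t a := by
    unfold Bent anc
    rw [if_neg hbc, if_pos h0, if_neg hs0]
  rw [det_P3, hU, hV, hW, hcr, hG, hBent]
  rw [show (((x0 : ℤ) : ℝ) - ee ℓ * ((uc n' ℓ q : ℤ) : ℝ))
        * (((y0 : ℤ) : ℝ) - ee ℓ * ((vc n' ℓ q : ℤ) : ℝ))
        * (((z0 : ℤ) : ℝ) - ee ℓ * ((wc n' ℓ q : ℤ) : ℝ))
      - (0 - 1) * ((((y0 : ℤ) : ℝ) - ee ℓ * ((vc n' ℓ q : ℤ) : ℝ))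
          * (0 - (ee ℓ)^2 * ((uc n' ℓ q : ℝ) * (wc n' ℓ q : ℝ))))
      = (((x0 : ℤ) : ℝ) - ee ℓ * ((uc n' ℓ q : ℤ) : ℝ))
        * (((y0 : ℤ) : ℝ) - ee ℓ * ((vc n' ℓ q : ℤ) : ℝ))
        * (((z0 : ℤ) : ℝ) - ee ℓ * ((wc n' ℓ q : ℤ) : ℝ))
      - (((y0 : ℤ) : ℝ) - ee ℓ * ((vc n' ℓ q : ℤ) : ℝ))
          * ((ee ℓ)^2 * ((uc n' ℓ q : ℝ) * (wc n' ℓ q : ℝ))) from by ring]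
  by_cases hta : t = a
  · -- zero entry: perturbation of the same block-0 point
    have hx0 : x0 = 0 := by rw [hx0def, hta, sub_self]
    have hy0 : y0 = 0 := by rw [hy0def, hta, sub_self]
    have hz0 : z0 = 0 := by rw [hz0def, hta, sub_self]
    rw [show AmatE (ν 0) ℓ t a = 0 from hta ▸ AmatE_diag (ν 0) ℓ t, hx0, hy0, hz0]
    rw [show (((0 : ℤ) : ℝ) - ee ℓ * ((uc n' ℓ q : ℤ) : ℝ))
        * (((0 : ℤ) : ℝ) - ee ℓ * ((vc n' ℓ q : ℤ) : ℝ))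
        * (((0 : ℤ) : ℝ) - ee ℓ * ((wc n' ℓ q : ℤ) : ℝ))
      - (((0 : ℤ) : ℝ) - ee ℓ * ((vc n' ℓ q : ℤ) : ℝ))
          * ((ee ℓ)^2 * ((uc n' ℓ q : ℝ) * (wc n' ℓ q : ℝ))) = 0 from by push_cast; ring]
    simp
  by_cases hsp : t = 2*ℓ - 1 ∧ (ν 0) % 2 = 0 ∧ a = 2*ℓ - 2
  · -- the special zero pair
    obtain ⟨hsp1, hsp2, hsp3⟩ := hsp
    have hx0 : x0 = 0 := by
      rw [hx0def, hsp1, hsp3]; unfold uc; split_ifs <;> omega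
    have hz0 : z0 = 0 := by
      rw [hz0def, hsp1, hsp3]; unfold wc Yc; split_ifs <;> omega
    have hvv : vvecE (ν 0) ℓ a = 0 := by
      unfold vvecE
      rw [hsp3, if_neg (by omega), if_pos ⟨by omega, Nat.even_iff.mpr hsp2⟩]
    have hB : AmatE (ν 0) ℓ t a = 0 := by
      unfold AmatE
      rw [if_neg (by rw [hsp1]; omega), if_pos (by rw [hsp3]; omega), hvv, neg_zero]
    rw [hB, hx0, hz0]
    rw [show (((0 : ℤ) : ℝ) - ee ℓ * ((uc n' ℓ q : ℤ) : ℝ))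
        * (((y0 : ℤ) : ℝ) - ee ℓ * ((vc n' ℓ q : ℤ) : ℝ))
        * (((0 : ℤ) : ℝ) - ee ℓ * ((wc n' ℓ q : ℤ) : ℝ))
      - (((y0 : ℤ) : ℝ) - ee ℓ * ((vc n' ℓ q : ℤ) : ℝ))
          * ((ee ℓ)^2 * ((uc n' ℓ q : ℝ) * (wc n' ℓ q : ℝ))) = 0 from by push_cast; ring]
    simp
  · -- generic mixed pair
    have hx0 : x0 ≠ 0 := by
      rw [hx0def]; unfold uc; split_ifs <;> omega
    have hy0 : y0 ≠ 0 := by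
      rw [hy0def]; unfold vc
      rcases Nat.lt_or_ge t (2*ℓ - 1) with h | h
      · rw [if_neg (by omega), if_neg (by omega)]
        exact sub_ne_zero.mpr (Yc_inj (ν 0) ℓ (by omega) ha2 hℓ1 hta)
      · rw [if_pos (by omega), if_neg (by omega)]
        have := Yc_pos (ν 0) ℓ a
        omega
    have hz0 : z0 ≠ 0 := by
      rw [hz0def]; unfold wc
      rcases Nat.lt_or_ge t (2*ℓ - 1) with h | h
      · rw [if_neg (by omega), if_neg (by omega)]
        exact sub_ne_zero.mpr (Yc_inj (ν 0) ℓ (by omega) ha2 hℓ1 hta)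
      · rw [if_pos (by omega), if_neg (by omega)]
        unfold Yc; split_ifs <;> omega
    rw [sign_mixed x0 y0 z0 hx0 hy0 hz0 (4*(ℓ:ℝ)+2) _ _ _ _
      (by have : (0:ℝ) ≤ (ℓ:ℝ) := Nat.cast_nonneg ℓ; linarith)
      (zdiff_abs ℓ _ _ (uc_abs' _ _ _ (by omega)) (uc_abs' _ _ _ ha2'))
      (zdiff_abs ℓ _ _ (vc_abs' _ _ _ (by omega)) (vc_abs' _ _ _ ha2'))
      (zdiff_abs ℓ _ _ (wc_abs' _ _ _ (by omega)) (wc_abs' _ _ _ ha2'))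
      (ecoord_small' ℓ _ (uc_abs' n' ℓ q hqm).1 (uc_abs' n' ℓ q hqm).2)
      (ecoord_small' ℓ _ (vc_abs' n' ℓ q hqm).1 (vc_abs' n' ℓ q hqm).2)
      (ecoord_small' ℓ _ (wc_abs' n' ℓ q hqm).1 (wc_abs' n' ℓ q hqm).2)
      (gsmall ℓ _ _ (uc_abs' n' ℓ q hqm) (wc_abs' n' ℓ q hqm))]
    rw [hx0def, hy0def, hz0def]
    exact sign_A (ν 0) ℓ t a (hν 0 (by omega)) (hνℓ 0 (by omega)) h0 ha2'


lemma core_sign (ℓ k : ℕ) (ν : ℕ → ℕ) (hk : 1 ≤ k) (hν : ∀ i < k, 1 ≤ ν i)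
    (hνℓ : ∀ i < k, ν i + 1 ≤ 2*ℓ) (hkℓ : k ≤ 2*ℓ) (t s : ℕ) (ht : t < 2*ℓ*k) (hs : s < 2*ℓ*k) :
    (SignType.sign ((P3 ℓ ν t - P3 ℓ ν s).det) : ℤ) = Bent ℓ ν t s := by
  have hℓ1 : 1 ≤ ℓ := by omega
  have h2ℓ : 0 < 2*ℓ := by omega
  by_cases hbc : t/(2*ℓ) = s/(2*ℓ)
  · exact core_same ℓ k ν hk hν hνℓ hkℓ t s ht hs hbc
  · rcases Nat.lt_or_ge t (2*ℓ) with h0 | h0 <;> rcases Nat.lt_or_ge s (2*ℓ) with hs0 | hs0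
    · exact absurd (by rw [Nat.div_eq_of_lt h0, Nat.div_eq_of_lt hs0]) hbc
    · exact core_mixed ℓ k ν hk hν hνℓ hkℓ t s ht hs h0 (by omega)
    · rw [sign_det_swap, core_mixed ℓ k ν hk hν hνℓ hkℓ s t hs ht hs0 (by omega),
        ← Bent_antisymm]
    · exact core_both ℓ k ν hk hν hνℓ hkℓ t s ht hs hbc (by omega) (by omega)

noncomputable def pad (M : Matrix (Fin 3) (Fin 3) ℝ) (x : ℝ) :
    (r : ℕ) → Matrix (Fin (2*r+3)) (Fin (2*r+3)) ℝ
  | 0 => M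
  | r+1 => Matrix.reindex (finSumFinEquiv.trans (finCongr (by omega)))
      (finSumFinEquiv.trans (finCongr (by omega)))
      (Matrix.fromBlocks !![0, x; -x, 0] 0 0 (pad M x r))

lemma reindex_sub {m n : Type*} [Fintype m] [Fintype n] (e : m ≃ n)
    (A B : Matrix m m ℝ) :
    Matrix.reindex e e A - Matrix.reindex e e B = Matrix.reindex e e (A - B) := by
  ext i j
  simp [Matrix.reindex_apply, Matrix.submatrix_apply, Matrix.sub_apply]

lemma fromBlocks_sub {m n : Type*} [Fintype m] [Fintype n]
    (A A' : Matrix m m ℝ) (D D' : Matrix n n ℝ) :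
    Matrix.fromBlocks A 0 0 D - Matrix.fromBlocks A' 0 0 D'
      = Matrix.fromBlocks (A - A') 0 0 (D - D') := by
  ext i j
  rcases i with i | i <;> rcases j with j | j <;>
    simp [Matrix.sub_apply]

lemma det_pad_sub (M N : Matrix (Fin 3) (Fin 3) ℝ) (x y : ℝ) :
    ∀ r, (pad M x r - pad N y r).det = ((x - y)^2)^r * (M - N).det
  | 0 => by rw [pow_zero, one_mul]; rfl
  | r+1 => by
    simp only [pad]
    rw [reindex_sub, Matrix.det_reindex_self, fromBlocks_sub, Matrix.det_fromBlocks_zero₂₁,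
      det_pad_sub M N x y r]
    have h2 : (!![0, x; -x, 0] - !![0, y; -y, 0]).det = (x - y)^2 := by
      simp [Matrix.det_fin_two, Matrix.sub_apply]
      ring
    rw [h2]; ring

end S6

/-- there exist real (2m+1)×(2m+1) matrices `P 1, …, P (2ℓk)` such that for
all `i ≠ j` the sign of `det (P i - P j)`, taken in {-1, 0, 1}, equals `(B_{ν,ℓ})_{ij}`. -/
theorem Bmat_realised_by_determinant_signs (k ℓ m : ℕ) (ν : ℕ → ℕ)
    (hk : 0 < k) (hm : 1 ≤ m)
    (hν : ∀ i < k, 0 < ν i) (hℓ : ∀ i < k, ν i + 1 ≤ 2 * ℓ) (hkℓ : k ≤ 2 * ℓ) :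
    ∃ P : Fin (2 * ℓ * k) → Matrix (Fin (2 * m + 1)) (Fin (2 * m + 1)) ℝ,
      ∀ i j : Fin (2 * ℓ * k), i ≠ j →
        ((SignType.sign ((P i - P j).det) : ℤ) = Bmat ℓ ν k i j) := by
  have hdim : 2*(m-1)+3 = 2*m+1 := by omega
  refine ⟨fun i => Matrix.reindex (finCongr hdim) (finCongr hdim)
    (S6.pad (S6.P3 ℓ ν (i : ℕ)) ((i : ℕ) : ℝ) (m-1)), fun i j hne => ?_⟩
  rw [S6.reindex_sub, Matrix.det_reindex_self, S6.det_pad_sub]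
  have hvne : ((i : ℕ) : ℝ) ≠ ((j : ℕ) : ℝ) := by
    intro h
    exact hne (Fin.ext (Nat.cast_injective h))
  have hpos : (0:ℝ) < ((((i : ℕ) : ℝ) - ((j : ℕ) : ℝ))^2)^(m-1) :=
    pow_pos (pow_two_pos_of_ne_zero (sub_ne_zero.mpr hvne)) _
  rw [S6.sign_smul_pos _ _ hpos,
    S6.core_sign ℓ k ν hk hν hℓ hkℓ (i : ℕ) (j : ℕ) i.isLt j.isLt,
    S6.closedB ℓ ν k hkℓ i j]
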